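/- Let X be the 4-dimensional subalgebra of M₃(ℂ) of matrices of the form [[a,0,d],[0,b,0],[0,0,c]]. Then Z(X) = {[[t,0,0],[0,b,0],[0,0,t]] : b,t ∈ ℂ}, the sets M₁ = {d₃₃ = 0 entries, i.e. [[a,0,d],[0,b,0],[0,0,0]]} and M₂ = {[[0,0,d],[0,b,0],[0,0,c]]} are distinct maximal modular ideals with M₁ ∩ Z(X) = M₂ ∩ Z(X), so X is not weakly central. -/

import Mathlib

noncomputable section

def centerSet (X : Type*) [NonUnitalRing X] : Set X := {z | ∀ x : X, z * x = x * z}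

def TwoSidedIdeal.IsModular {X : Type*} [NonUnitalRing X] (M : TwoSidedIdeal X) : Prop :=
  ∃ u : X, ∀ x : X, x * u - x ∈ M ∧ u * x - x ∈ M

def TwoSidedIdeal.IsMaxMod {X : Type*} [NonUnitalRing X] (M : TwoSidedIdeal X) : Prop :=
  M.IsModular ∧ M ≠ ⊤ ∧ ∀ N : TwoSidedIdeal X, M ≤ N → N ≠ ⊤ → N = M

def WeaklyCentral (X : Type*) [NonUnitalRing X] : Prop :=
  (∀ M : TwoSidedIdeal X, M.IsMaxMod → ¬ centerSet X ⊆ (M : Set X)) ∧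
  ∀ M N : TwoSidedIdeal X, M.IsMaxMod → N.IsMaxMod →
    (M : Set X) ∩ centerSet X = (N : Set X) ∩ centerSet X → M = N

/-- The algebra `{[[a,0,d],[0,b,0],[0,0,c]] : a,b,c,d ∈ ℂ}` as a non-unital
subalgebra of `M₃(ℂ)`. -/
def arrowAlg : NonUnitalSubalgebra ℂ (Matrix (Fin 3) (Fin 3) ℂ) where
  carrier := {m | m 0 1 = 0 ∧ m 1 0 = 0 ∧ m 1 2 = 0 ∧ m 2 0 = 0 ∧ m 2 1 = 0}
  add_mem' := by
    rintro a b ⟨h1, h2, h3, h4, h5⟩ ⟨g1, g2, g3, g4, g5⟩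
    refine ⟨?_, ?_, ?_, ?_, ?_⟩ <;> simp [h1, h2, h3, h4, h5, g1, g2, g3, g4, g5]
  zero_mem' := by refine ⟨?_, ?_, ?_, ?_, ?_⟩ <;> simp
  mul_mem' := by
    rintro a b ⟨h1, h2, h3, h4, h5⟩ ⟨g1, g2, g3, g4, g5⟩
    refine ⟨?_, ?_, ?_, ?_, ?_⟩ <;>
      simp [Matrix.mul_apply, Fin.sum_univ_three, h1, h2, h3, h4, h5, g1, g2, g3, g4, g5]
  smul_mem' := by
    rintro c a ⟨h1, h2, h3, h4, h5⟩
    refine ⟨?_, ?_, ?_, ?_, ?_⟩ <;> simp [h1, h2, h3, h4, h5]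

namespace ArrowAux

open Matrix

lemma one_mem : (1 : Matrix (Fin 3) (Fin 3) ℂ) ∈ arrowAlg := by
  refine ⟨?_, ?_, ?_, ?_, ?_⟩ <;> simp [Matrix.one_apply]

def u : arrowAlg := ⟨1, one_mem⟩

lemma coe_mul (x y : arrowAlg) : ((x * y : arrowAlg) : Matrix (Fin 3) (Fin 3) ℂ) = (x : Matrix (Fin 3) (Fin 3) ℂ) * y := rfl

lemma u_mul (x : arrowAlg) : u * x = x := Subtype.ext (by simp [coe_mul, u])

lemma mul_u (x : arrowAlg) : x * u = x := Subtype.ext (by simp [coe_mul, u])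

lemma mul22 (x y : arrowAlg) :
    ((x * y : arrowAlg) : Matrix (Fin 3) (Fin 3) ℂ) 2 2 =
      (x : Matrix (Fin 3) (Fin 3) ℂ) 2 2 * (y : Matrix (Fin 3) (Fin 3) ℂ) 2 2 := by
  obtain ⟨_, _, _, h4, h5⟩ := x.2
  simp [coe_mul, Matrix.mul_apply, Fin.sum_univ_three, h4, h5]

lemma mul00 (x y : arrowAlg) :
    ((x * y : arrowAlg) : Matrix (Fin 3) (Fin 3) ℂ) 0 0 =
      (x : Matrix (Fin 3) (Fin 3) ℂ) 0 0 * (y : Matrix (Fin 3) (Fin 3) ℂ) 0 0 := by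
  obtain ⟨_, g2, _, g4, _⟩ := y.2
  simp [coe_mul, Matrix.mul_apply, Fin.sum_univ_three, g2, g4]

def diagIdeal (i : Fin 3)
    (hmul : ∀ x y : arrowAlg, ((x * y : arrowAlg) : Matrix (Fin 3) (Fin 3) ℂ) i i =
      (x : Matrix (Fin 3) (Fin 3) ℂ) i i * (y : Matrix (Fin 3) (Fin 3) ℂ) i i) :
    TwoSidedIdeal arrowAlg :=
  TwoSidedIdeal.mk' {m : arrowAlg | (m : Matrix (Fin 3) (Fin 3) ℂ) i i = 0}
    (by simp)
    (fun {x y} hx hy => by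
      simp only [Set.mem_setOf_eq] at *
      show ((x : Matrix (Fin 3) (Fin 3) ℂ) + y) i i = 0
      simp [hx, hy])
    (fun {x} hx => by
      simp only [Set.mem_setOf_eq] at *
      show (-(x : Matrix (Fin 3) (Fin 3) ℂ)) i i = 0
      simp [hx])
    (fun {x y} hy => by
      simp only [Set.mem_setOf_eq] at *
      rw [hmul, hy, mul_zero])
    (fun {x y} hx => by
      simp only [Set.mem_setOf_eq] at *
      rw [hmul, hx, zero_mul])

lemma mem_diagIdeal (i : Fin 3) (hmul) (m : arrowAlg) :
    m ∈ diagIdeal i hmul ↔ (m : Matrix (Fin 3) (Fin 3) ℂ) i i = 0 :=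
  TwoSidedIdeal.mem_mk' _ _ _ _ _ _ m

lemma smul_eq (c : ℂ) (n : arrowAlg) : (c • u) * n = c • n := by
  apply Subtype.ext
  show ((c • (1 : Matrix (Fin 3) (Fin 3) ℂ)) * n) = c • (n : Matrix (Fin 3) (Fin 3) ℂ)
  simp

lemma isMaxMod_diagIdeal (i : Fin 3) (hmul) : (diagIdeal i hmul).IsMaxMod := by
  refine ⟨⟨u, fun x => ?_⟩, ?_, ?_⟩
  · rw [mul_u, u_mul, sub_self]
    exact ⟨(diagIdeal i hmul).zero_mem, (diagIdeal i hmul).zero_mem⟩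
  · intro h
    have : u ∈ diagIdeal i hmul := h ▸ TwoSidedIdeal.mem_top _
    rw [mem_diagIdeal] at this
    simp [u, Matrix.one_apply] at this
  · intro N hMN hNtop
    refine le_antisymm ?_ hMN
    by_contra hc
    rw [TwoSidedIdeal.le_iff, Set.not_subset] at hc
    obtain ⟨n, hnN, hnM⟩ := hc
    rw [SetLike.mem_coe, mem_diagIdeal] at hnM
    apply hNtop
    refine eq_top_iff.2 fun x _ => ?_
    set c : ℂ := (x : Matrix (Fin 3) (Fin 3) ℂ) i i / (n : Matrix (Fin 3) (Fin 3) ℂ) i i with hc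
    have h1 : x - c • n ∈ diagIdeal i hmul := by
      rw [mem_diagIdeal]
      show ((x : Matrix (Fin 3) (Fin 3) ℂ) - c • (n : Matrix (Fin 3) (Fin 3) ℂ)) i i = 0
      simp only [Matrix.sub_apply, Matrix.smul_apply, smul_eq_mul, hc]
      field_simp
      simp
    have h2 : c • n ∈ N := by
      rw [← smul_eq]
      exact N.mul_mem_left _ _ hnN
    have := N.add_mem (hMN h1) h2
    simpa using this

def E (i j : Fin 3) (hij : (Matrix.single i j (1:ℂ)) ∈ arrowAlg) : arrowAlg :=
  ⟨Matrix.single i j 1, hij⟩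

lemma E22_mem : (Matrix.single (2:Fin 3) 2 (1:ℂ)) ∈ arrowAlg := by
  refine ⟨?_, ?_, ?_, ?_, ?_⟩ <;> simp [Matrix.single]
lemma E02_mem : (Matrix.single (0:Fin 3) 2 (1:ℂ)) ∈ arrowAlg := by
  refine ⟨?_, ?_, ?_, ?_, ?_⟩ <;> simp [Matrix.single]
lemma E00_mem : (Matrix.single (0:Fin 3) 0 (1:ℂ)) ∈ arrowAlg := by
  refine ⟨?_, ?_, ?_, ?_, ?_⟩ <;> simp [Matrix.single]

lemma center_eq : centerSet arrowAlg = {z : arrowAlg |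
    (z : Matrix (Fin 3) (Fin 3) ℂ) 0 2 = 0 ∧
    (z : Matrix (Fin 3) (Fin 3) ℂ) 0 0 = (z : Matrix (Fin 3) (Fin 3) ℂ) 2 2} := by
  ext z
  obtain ⟨z1, z2, z3, z4, z5⟩ := z.2
  constructor
  · intro hz
    constructor
    · have h := congrArg (fun m : arrowAlg => (m : Matrix (Fin 3) (Fin 3) ℂ) 0 2)
        (hz (E 2 2 E22_mem))
      simpa [E, coe_mul, Matrix.mul_apply, Fin.sum_univ_three, Matrix.single] using h
    · have h := congrArg (fun m : arrowAlg => (m : Matrix (Fin 3) (Fin 3) ℂ) 0 2)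
        (hz (E 0 2 E02_mem))
      simpa [E, coe_mul, Matrix.mul_apply, Fin.sum_univ_three, Matrix.single] using h
  · rintro ⟨hz1, hz2⟩ x
    obtain ⟨x1, x2, x3, x4, x5⟩ := x.2
    apply Subtype.ext
    show (z : Matrix (Fin 3) (Fin 3) ℂ) * x = (x : Matrix (Fin 3) (Fin 3) ℂ) * z
    ext i j
    fin_cases i <;> fin_cases j <;>
      simp [Matrix.mul_apply, Fin.sum_univ_three, z1, z2, z3, z4, z5, hz1, hz2,
        x1, x2, x3, x4, x5] <;> ring

end ArrowAux

/-- For `X = {[[a,0,d],[0,b,0],[0,0,c]]} ⊆ M₃(ℂ)`: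
`Z(X) = {[[t,0,0],[0,b,0],[0,0,t]]}`; the ideals `M₁` (entries with `c = 0`) and
`M₂` (entries with `a = 0`) are distinct maximal modular ideals with
`M₁ ∩ Z(X) = M₂ ∩ Z(X)`, and hence `X` is not weakly central. -/
theorem arrowAlg_not_weaklyCentral :
    (centerSet arrowAlg = {z : arrowAlg |
        (z : Matrix (Fin 3) (Fin 3) ℂ) 0 2 = 0 ∧
        (z : Matrix (Fin 3) (Fin 3) ℂ) 0 0 = (z : Matrix (Fin 3) (Fin 3) ℂ) 2 2}) ∧
    (∃ M₁ M₂ : TwoSidedIdeal arrowAlg,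
      (∀ m : arrowAlg, m ∈ M₁ ↔ (m : Matrix (Fin 3) (Fin 3) ℂ) 2 2 = 0) ∧
      (∀ m : arrowAlg, m ∈ M₂ ↔ (m : Matrix (Fin 3) (Fin 3) ℂ) 0 0 = 0) ∧
      M₁ ≠ M₂ ∧ M₁.IsMaxMod ∧ M₂.IsMaxMod ∧
      (M₁ : Set arrowAlg) ∩ centerSet arrowAlg = (M₂ : Set arrowAlg) ∩ centerSet arrowAlg) ∧
    ¬ WeaklyCentral arrowAlg := by
  classical
  set M₁ := ArrowAux.diagIdeal 2 ArrowAux.mul22 with hM₁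
  set M₂ := ArrowAux.diagIdeal 0 ArrowAux.mul00 with hM₂
  have hmem₁ : ∀ m : arrowAlg, m ∈ M₁ ↔ (m : Matrix (Fin 3) (Fin 3) ℂ) 2 2 = 0 :=
    ArrowAux.mem_diagIdeal 2 ArrowAux.mul22
  have hmem₂ : ∀ m : arrowAlg, m ∈ M₂ ↔ (m : Matrix (Fin 3) (Fin 3) ℂ) 0 0 = 0 :=
    ArrowAux.mem_diagIdeal 0 ArrowAux.mul00
  have hne : M₁ ≠ M₂ := by
    intro h
    have h1 : ArrowAux.E 0 0 ArrowAux.E00_mem ∈ M₁ := by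
      rw [hmem₁]; simp [ArrowAux.E, Matrix.single]
    rw [h, hmem₂] at h1
    simp [ArrowAux.E, Matrix.single] at h1
  have hint : (M₁ : Set arrowAlg) ∩ centerSet arrowAlg =
      (M₂ : Set arrowAlg) ∩ centerSet arrowAlg := by
    ext z
    simp only [Set.mem_inter_iff, SetLike.mem_coe, hmem₁, hmem₂, ArrowAux.center_eq,
      Set.mem_setOf_eq]
    constructor
    · rintro ⟨h1, h2, h3⟩; exact ⟨h3.trans h1, h2, h3⟩
    · rintro ⟨h1, h2, h3⟩; exact ⟨h3.symm.trans h1, h2, h3⟩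
  refine ⟨ArrowAux.center_eq, ⟨M₁, M₂, hmem₁, hmem₂, hne,
    ArrowAux.isMaxMod_diagIdeal 2 ArrowAux.mul22,
    ArrowAux.isMaxMod_diagIdeal 0 ArrowAux.mul00, hint⟩, ?_⟩
  rintro ⟨-, h2⟩
  exact hne (h2 M₁ M₂ (ArrowAux.isMaxMod_diagIdeal 2 ArrowAux.mul22)
    (ArrowAux.isMaxMod_diagIdeal 0 ArrowAux.mul00) hint)
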